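/- Let Q be the thin category of a finite linear order and W ⊆ Mor(Q) a 2-out-of-6 closed class. Define Mor'(a,b) as the set of equivalence classes of diagrams a →f m ←w m₀ →g b with w ∈ W (f, g arbitrary morphisms of Q), under the equivalence relation generated by: (f, w, g) ∼ (f', w', g') whenever there exist x: m → m' and x₀: m₀ → m₀' with x ∘ w = w' ∘ x₀, f' = x ∘ f and g = g' ∘ x₀. Then every morphism a →f m ←id_m m →g b (i.e., the image of an ordinary morphism g∘f of Q) with g ∘ f ∈ W is invertible in the resulting category: the class of b →id_b b ←{g∘f} a →id_a a is a two-sided inverse. -/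

import Mathlib

open CategoryTheory

/-- A class of morphisms satisfies the 2-out-of-6 property if it contains all identities
and whenever `g ∘ f ∈ W` and `h ∘ g ∈ W` for a composable triple, then
`f, g, h, h ∘ g ∘ f ∈ W`. -/
def TwoOutOfSix {C : Type*} [Category C] (W : MorphismProperty C) : Prop :=
  (∀ X : C, W (𝟙 X)) ∧
  ∀ ⦃a b c d : C⦄ (f : a ⟶ b) (g : b ⟶ c) (h : c ⟶ d),
    W (f ≫ g) → W (g ≫ h) → W f ∧ W g ∧ W h ∧ W (f ≫ g ≫ h)

/-- A span (fraction) diagram `a ⟶f m ⟵w m₀ ⟶g b` with `w ∈ W`, representing the formal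
composite `g ∘ w⁻¹ ∘ f` in the fraction model of the localization. -/
structure Span {N : ℕ} (W : MorphismProperty (Fin N)) (a b : Fin N) where
  m : Fin N
  m0 : Fin N
  f : a ⟶ m
  w : m0 ⟶ m
  hw : W w
  g : m0 ⟶ b

/-- The generating relation on spans: `(f, w, g) ∼ (f', w', g')` when there are
`x : m ⟶ m'` and `x₀ : m₀ ⟶ m₀'` with `x ∘ w = w' ∘ x₀`, `f' = x ∘ f`, `g = g' ∘ x₀`. -/
def SpanRel {N : ℕ} (W : MorphismProperty (Fin N)) {a b : Fin N}
    (s s' : Span W a b) : Prop :=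
  ∃ (x : s.m ⟶ s'.m) (x₀ : s.m0 ⟶ s'.m0),
    s.w ≫ x = x₀ ≫ s'.w ∧ s'.f = s.f ≫ x ∧ s.g = x₀ ≫ s'.g

/-- The identity span at `a`. -/
def idSpan {N : ℕ} {W : MorphismProperty (Fin N)} (hW : TwoOutOfSix W) (a : Fin N) :
    Span W a a :=
  ⟨a, a, 𝟙 a, 𝟙 a, hW.1 a, 𝟙 a⟩

/-- Composition of spans, defined case-by-case as in the fraction model of `Q[W⁻¹]`:
if `y₀ : m₀ ⟶ n₀` exists the composite is `(f, w, k ∘ y₀)`; if `y : m ⟶ n` exists it is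
`(y ∘ f, u, k)`; otherwise there are `z₀ : n₀ ⟶ m₀` and `z : n ⟶ m` and the composite is
`(f, z ∘ h ∘ g ∘ z₀, k)`, whose middle morphism lies in `W` by the 2-out-of-6 property. -/
def spanComp {N : ℕ} {W : MorphismProperty (Fin N)} (hW : TwoOutOfSix W) {a b c : Fin N}
    (s : Span W a b) (t : Span W b c) : Span W a c :=
  if h0 : s.m0 ≤ t.m0 then
    ⟨s.m, s.m0, s.f, s.w, s.hw, homOfLE h0 ≫ t.g⟩
  else if h1 : s.m ≤ t.m then
    ⟨t.m, t.m0, s.f ≫ homOfLE h1, t.w, t.hw, t.g⟩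
  else
    ⟨s.m, t.m0, s.f,
      homOfLE (le_of_not_ge h0) ≫ (s.g ≫ t.f) ≫ homOfLE (le_of_not_ge h1),
      by
        have hu : W (homOfLE (le_of_not_ge h0) ≫ (s.g ≫ t.f)) := by
          rw [Subsingleton.elim (homOfLE (le_of_not_ge h0) ≫ (s.g ≫ t.f)) t.w]
          exact t.hw
        have hv : W ((s.g ≫ t.f) ≫ homOfLE (le_of_not_ge h1)) := by
          rw [Subsingleton.elim ((s.g ≫ t.f) ≫ homOfLE (le_of_not_ge h1)) s.w]
          exact s.hw
        exact (hW.2 _ _ _ hu hv).2.2.2,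
      t.g⟩


lemma spanRel_of_le {N : ℕ} {W : MorphismProperty (Fin N)} {a b : Fin N}
    (s s' : Span W a b) (h : s.m ≤ s'.m) (h0 : s.m0 ≤ s'.m0) : SpanRel W s s' :=
  ⟨homOfLE h, homOfLE h0, Subsingleton.elim _ _, Subsingleton.elim _ _,
    Subsingleton.elim _ _⟩

/-- In the fraction model of `Q[W⁻¹]` for the thin category of a finite linear order and a
2-out-of-6 closed class `W`, the image `(f, id, g)` of an ordinary morphism `g ∘ f` of `Q`
with `g ∘ f ∈ W` is invertible: the span `(id_b, g∘f, id_a)` is a two-sided inverse, up to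
the equivalence relation generated by `SpanRel`. -/
theorem stmt18 {N : ℕ} (W : MorphismProperty (Fin N)) (hW : TwoOutOfSix W)
    {a m b : Fin N} (f : a ⟶ m) (g : m ⟶ b) (hfg : W (f ≫ g)) :
    Relation.EqvGen (SpanRel W)
      (spanComp hW ⟨m, m, f, 𝟙 m, hW.1 m, g⟩ ⟨b, a, 𝟙 b, f ≫ g, hfg, 𝟙 a⟩)
      (idSpan hW a) ∧
    Relation.EqvGen (SpanRel W)
      (spanComp hW ⟨b, a, 𝟙 b, f ≫ g, hfg, 𝟙 a⟩ ⟨m, m, f, 𝟙 m, hW.1 m, g⟩)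
      (idSpan hW b) := by
  constructor
  · by_cases h0 : m ≤ a
    · rw [spanComp, dif_pos h0]
      exact Relation.EqvGen.rel _ _ (spanRel_of_le _ _ h0 h0)
    · rw [spanComp, dif_neg h0, dif_pos (leOfHom g)]
      exact Relation.EqvGen.symm _ _
        (Relation.EqvGen.rel _ _ (spanRel_of_le _ _ (leOfHom (f ≫ g)) le_rfl))
  · rw [spanComp, dif_pos (leOfHom f)]
    exact Relation.EqvGen.rel _ _ (spanRel_of_le _ _ le_rfl (leOfHom (f ≫ g)))
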